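/- Let 1 < α < 3 and t > 0, and let f(x) = f_{α,1/2,t}(x) = (t cos(π/(2α))/π) · (x² + t²)/(x⁴ + t⁴ + 2x²t² cos(π/α)). Then 2 sin(π/(2α)) − 1 > 0, the derivative f′ vanishes exactly at the three points x = 0 and x = ± t √(2 sin(π/(2α)) − 1), f has strict local maxima at x = ± t √(2 sin(π/(2α)) − 1), and f has a strict local minimum at x = 0; in particular f is bimodal. -/

import Mathlib

open Real Filter Topology

/-- The mixture-of-asymmetric-Cauchy probability density `f_{α,p,t}`. -/
noncomputable def cauchyMixDensity (α p t x : ℝ) : ℝ :=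
  (t * Real.cos (π / (2 * α)) / π) *
    ((x ^ 2 + t ^ 2 + 2 * (2 * p - 1) * x * t * Real.sin (π / (2 * α))) /
      (x ^ 4 + t ^ 4 + 2 * x ^ 2 * t ^ 2 * Real.cos (π / α)))

section aux

variable {C s t c x : ℝ}

/-- The symmetric density in reduced form. -/
noncomputable def redDens (C t c x : ℝ) : ℝ :=
  C * ((x ^ 2 + t ^ 2) / (x ^ 4 + t ^ 4 + 2 * x ^ 2 * t ^ 2 * c))

lemma Qpos (ht : 0 < t) (hc : c = 1 - 2 * s ^ 2) (hs0 : 0 < s) (hs1 : s < 1) (x : ℝ) :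
    0 < x ^ 4 + t ^ 4 + 2 * x ^ 2 * t ^ 2 * c := by
  rcases eq_or_ne x 0 with rfl | hx
  · have : (0:ℝ) ^ 4 + t ^ 4 + 2 * 0 ^ 2 * t ^ 2 * c = t ^ 4 := by ring
    rw [this]; positivity
  · have h1 : 0 < x ^ 2 * t ^ 2 := by positivity
    have h2 : 0 < 1 - s ^ 2 := by nlinarith
    nlinarith [sq_nonneg (x ^ 2 - t ^ 2), mul_pos h1 h2]

lemma hasDerivAt_redDens (hQ : x ^ 4 + t ^ 4 + 2 * x ^ 2 * t ^ 2 * c ≠ 0) :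
    HasDerivAt (redDens C t c)
      (C * ((2 * x * (x ^ 4 + t ^ 4 + 2 * x ^ 2 * t ^ 2 * c)
          - (x ^ 2 + t ^ 2) * (4 * x ^ 3 + 4 * x * t ^ 2 * c))
        / (x ^ 4 + t ^ 4 + 2 * x ^ 2 * t ^ 2 * c) ^ 2)) x := by
  have hP : HasDerivAt (fun x : ℝ => x ^ 2 + t ^ 2) (2 * x) x := by
    simpa using (hasDerivAt_pow 2 x).add_const (t ^ 2)
  have hQ' : HasDerivAt (fun x : ℝ => x ^ 4 + t ^ 4 + 2 * x ^ 2 * t ^ 2 * c)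
      (4 * x ^ 3 + 4 * x * t ^ 2 * c) x := by
    have h1 : HasDerivAt (fun x : ℝ => x ^ 4 + t ^ 4) (4 * x ^ 3) x := by
      simpa using (hasDerivAt_pow 4 x).add_const (t ^ 4)
    have h2 : HasDerivAt (fun x : ℝ => 2 * x ^ 2 * t ^ 2 * c) (4 * x * t ^ 2 * c) x := by
      have h := ((hasDerivAt_pow 2 x).const_mul 2).mul_const (t ^ 2 * c)
      have he : (fun x : ℝ => 2 * x ^ 2 * t ^ 2 * c) = fun x : ℝ => 2 * x ^ 2 * (t ^ 2 * c) := by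
        funext y; ring
      rw [he]
      exact h.congr_deriv (by push_cast; ring)
    exact h1.add h2
  exact (hP.div hQ' hQ).const_mul C

end aux

/-- For `1 < α < 3` and `t > 0`, the symmetric density
`f = f_{α,1/2,t}` is bimodal: `2 sin(π/(2α)) − 1 > 0`, the derivative of `f`
vanishes exactly at `0` and `± t √(2 sin(π/(2α)) − 1)`, `f` has strict local
maxima at `± t √(2 sin(π/(2α)) − 1)` and a strict local minimum at `0`. -/
theorem cauchyMix_symmetric_bimodal (α t : ℝ) (hα1 : 1 < α) (hα3 : α < 3)
    (ht : 0 < t) :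
    0 < 2 * Real.sin (π / (2 * α)) - 1 ∧
    (∀ x : ℝ, deriv (cauchyMixDensity α (1 / 2) t) x = 0 ↔
      x = 0 ∨ x = t * Real.sqrt (2 * Real.sin (π / (2 * α)) - 1) ∨
        x = -(t * Real.sqrt (2 * Real.sin (π / (2 * α)) - 1))) ∧
    (∀ᶠ y in 𝓝[≠] (t * Real.sqrt (2 * Real.sin (π / (2 * α)) - 1)),
      cauchyMixDensity α (1 / 2) t y <
        cauchyMixDensity α (1 / 2) t
          (t * Real.sqrt (2 * Real.sin (π / (2 * α)) - 1))) ∧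
    (∀ᶠ y in 𝓝[≠] (-(t * Real.sqrt (2 * Real.sin (π / (2 * α)) - 1))),
      cauchyMixDensity α (1 / 2) t y <
        cauchyMixDensity α (1 / 2) t
          (-(t * Real.sqrt (2 * Real.sin (π / (2 * α)) - 1)))) ∧
    (∀ᶠ y in 𝓝[≠] (0 : ℝ),
      cauchyMixDensity α (1 / 2) t 0 < cauchyMixDensity α (1 / 2) t y) := by
  have hα0 : 0 < α := by linarith
  have hπ := Real.pi_pos
  have hθpos : 0 < π / (2 * α) := by positivity
  have hθlt : π / (2 * α) < π / 2 := by
    apply div_lt_div_of_pos_left hπ two_pos; linarith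
  have hθgt : π / 6 < π / (2 * α) := by
    apply div_lt_div_of_pos_left hπ (by positivity); linarith
  set s := Real.sin (π / (2 * α)) with hsdef
  have hs_half : 1 / 2 < s := by
    have h := Real.sin_lt_sin_of_lt_of_le_pi_div_two (x := π / 6) (y := π / (2 * α))
      (by linarith) (le_of_lt hθlt) hθgt
    rw [Real.sin_pi_div_six] at h; exact h
  have hs1 : s < 1 := by
    have h := Real.sin_lt_sin_of_lt_of_le_pi_div_two (x := π / (2 * α)) (y := π / 2)
      (by linarith) (le_refl _) hθlt
    rwa [Real.sin_pi_div_two] at h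
  have hs0 : 0 < s := by linarith
  have h2s : 0 < 2 * s - 1 := by linarith
  have hcosθ : 0 < Real.cos (π / (2 * α)) :=
    Real.cos_pos_of_mem_Ioo ⟨by linarith, hθlt⟩
  set c := Real.cos (π / α) with hcdef
  have hc : c = 1 - 2 * s ^ 2 := by
    have h2 : π / α = 2 * (π / (2 * α)) := by field_simp
    rw [hcdef, h2, Real.cos_two_mul]
    have h3 := Real.sin_sq_add_cos_sq (π / (2 * α))
    rw [← hsdef] at h3; linarith
  set C := t * Real.cos (π / (2 * α)) / π with hCdef
  have hC : 0 < C := by positivity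
  have hfe : cauchyMixDensity α (1 / 2) t = redDens C t c := by
    funext x
    simp only [cauchyMixDensity, redDens, hCdef, hcdef]
    norm_num
  have hQpos : ∀ x : ℝ, 0 < x ^ 4 + t ^ 4 + 2 * x ^ 2 * t ^ 2 * c :=
    Qpos ht hc hs0 hs1
  have hQne : ∀ x : ℝ, x ^ 4 + t ^ 4 + 2 * x ^ 2 * t ^ 2 * c ≠ 0 :=
    fun x => (hQpos x).ne'
  set x₀ := t * Real.sqrt (2 * s - 1) with hx₀def
  have hx₀sq : x₀ ^ 2 = (2 * s - 1) * t ^ 2 := by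
    rw [hx₀def, mul_pow, Real.sq_sqrt h2s.le]; ring
  have hx₀pos : 0 < x₀ := by
    rw [hx₀def]; exact mul_pos ht (Real.sqrt_pos.mpr h2s)
  -- the key global-maximum inequality
  have hmax : ∀ z : ℝ, z ^ 2 = (2 * s - 1) * t ^ 2 → ∀ y : ℝ, y ^ 2 ≠ z ^ 2 →
      redDens C t c y < redDens C t c z := by
    intro z hz y hy
    have key : (z ^ 2 + t ^ 2) * (y ^ 4 + t ^ 4 + 2 * y ^ 2 * t ^ 2 * c)
        - (z ^ 4 + t ^ 4 + 2 * z ^ 2 * t ^ 2 * c) * (y ^ 2 + t ^ 2)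
        = 2 * s * t ^ 2 * (y ^ 2 - z ^ 2) ^ 2 := by
      have h4 : z ^ 4 = ((2 * s - 1) * t ^ 2) ^ 2 := by
        rw [show z ^ 4 = (z ^ 2) ^ 2 by ring, hz]
      rw [hc, h4, hz]; ring
    have hdiff : redDens C t c z - redDens C t c y
        = C * ((2 * s * t ^ 2 * (y ^ 2 - z ^ 2) ^ 2)
            / ((z ^ 4 + t ^ 4 + 2 * z ^ 2 * t ^ 2 * c)
              * (y ^ 4 + t ^ 4 + 2 * y ^ 2 * t ^ 2 * c))) := by
      simp only [redDens, ← mul_sub]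
      rw [div_sub_div _ _ (hQne z) (hQne y), key]
    have hnum : 0 < 2 * s * t ^ 2 * (y ^ 2 - z ^ 2) ^ 2 := by
      have : y ^ 2 - z ^ 2 ≠ 0 := sub_ne_zero.mpr hy
      positivity
    have : 0 < redDens C t c z - redDens C t c y := by
      rw [hdiff]
      exact mul_pos hC (div_pos hnum (mul_pos (hQpos z) (hQpos y)))
    linarith
  have hsq_ne : ∀ z y : ℝ, z ≠ 0 → y ≠ z → y ≠ -z → y ^ 2 ≠ z ^ 2 := by
    intro z y hz h1 h2 h
    rcases sq_eq_sq_iff_eq_or_eq_neg.mp h with h' | h'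
    · exact h1 h'
    · exact h2 h'
  -- local maximum at a point z with z² = (2s-1)t², z ≠ 0
  have hlocmax : ∀ z : ℝ, z ^ 2 = (2 * s - 1) * t ^ 2 → z ≠ 0 →
      ∀ᶠ y in 𝓝[≠] z, redDens C t c y < redDens C t c z := by
    intro z hz hzne
    have hne : ∀ᶠ y in 𝓝 z, y ≠ -z := eventually_ne_nhds (by
      intro h; apply hzne; linarith [h])
    filter_upwards [eventually_nhdsWithin_of_eventually_nhds hne,
      self_mem_nhdsWithin] with y hy1 hy2
    exact hmax z hz y (hsq_ne z y hzne hy2 hy1)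
  refine ⟨h2s, ?_, ?_, ?_, ?_⟩
  · -- derivative characterization
    intro x
    rw [hfe, (hasDerivAt_redDens (hQne x)).deriv]
    have hfac : 2 * x * (x ^ 4 + t ^ 4 + 2 * x ^ 2 * t ^ 2 * c)
        - (x ^ 2 + t ^ 2) * (4 * x ^ 3 + 4 * x * t ^ 2 * c)
        = -2 * x * ((x ^ 2 - (2 * s - 1) * t ^ 2) * (x ^ 2 + (2 * s + 1) * t ^ 2)) := by
      rw [hc]; ring
    rw [hfac, mul_eq_zero]
    have hB : x ^ 2 + (2 * s + 1) * t ^ 2 ≠ 0 := by positivity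
    have hQ2 : (x ^ 4 + t ^ 4 + 2 * x ^ 2 * t ^ 2 * c) ^ 2 ≠ 0 := pow_ne_zero _ (hQne x)
    constructor
    · rintro (hC0 | hND)
      · exact absurd hC0 hC.ne'
      · rcases div_eq_zero_iff.mp hND with hN | hD
        swap
        · exact absurd hD hQ2
        rcases mul_eq_zero.mp hN with h1 | h2
        · left
          rcases mul_eq_zero.mp h1 with h | h
          · norm_num at h
          · exact h
        · rcases mul_eq_zero.mp h2 with h | h
          · have hx2 : x ^ 2 = x₀ ^ 2 := by rw [hx₀sq]; linarith [sub_eq_zero.mp h]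
            exact Or.inr (sq_eq_sq_iff_eq_or_eq_neg.mp hx2)
          · exact absurd h hB
    · intro hx
      right
      rw [div_eq_zero_iff]
      left
      rcases hx with rfl | rfl | rfl
      · ring
      · have : x₀ ^ 2 - (2 * s - 1) * t ^ 2 = 0 := by rw [hx₀sq]; ring
        rw [show (-2 : ℝ) * x₀ * ((x₀ ^ 2 - (2 * s - 1) * t ^ 2) * (x₀ ^ 2 + (2 * s + 1) * t ^ 2))
          = -2 * x₀ * (x₀ ^ 2 + (2 * s + 1) * t ^ 2) * (x₀ ^ 2 - (2 * s - 1) * t ^ 2) by ring,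
          this, mul_zero]
      · have h2 : (-x₀) ^ 2 - (2 * s - 1) * t ^ 2 = 0 := by
          rw [neg_pow, hx₀sq]; ring
        rw [show (-2 : ℝ) * (-x₀) * (((-x₀) ^ 2 - (2 * s - 1) * t ^ 2) * ((-x₀) ^ 2 + (2 * s + 1) * t ^ 2))
          = -2 * (-x₀) * ((-x₀) ^ 2 + (2 * s + 1) * t ^ 2) * ((-x₀) ^ 2 - (2 * s - 1) * t ^ 2) by ring,
          h2, mul_zero]
  · rw [hfe]; exact hlocmax x₀ hx₀sq hx₀pos.ne'
  · rw [hfe]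
    refine hlocmax (-x₀) ?_ (by simpa using hx₀pos.ne')
    rw [neg_pow, hx₀sq]; ring
  · -- local minimum at 0
    rw [hfe]
    have hK : 0 < (4 * s ^ 2 - 1) * t ^ 2 := by nlinarith
    have hev : ∀ᶠ y in 𝓝 (0:ℝ), y ^ 2 < (4 * s ^ 2 - 1) * t ^ 2 := by
      have h0 : (fun y : ℝ => y ^ 2) 0 < (fun _ : ℝ => (4 * s ^ 2 - 1) * t ^ 2) 0 := by
        simpa using hK
      have := ContinuousAt.eventually_lt (f := fun y : ℝ => y ^ 2)
        (g := fun _ : ℝ => (4 * s ^ 2 - 1) * t ^ 2)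
        ((continuous_pow 2).continuousAt) continuousAt_const h0
      simpa using this
    filter_upwards [eventually_nhdsWithin_of_eventually_nhds hev,
      self_mem_nhdsWithin] with y hy1 hy2
    have hy0 : (0:ℝ) < y ^ 2 := lt_of_le_of_ne (sq_nonneg y) (Ne.symm (pow_ne_zero 2 hy2))
    have key : (y ^ 2 + t ^ 2) * (0 ^ 4 + t ^ 4 + 2 * 0 ^ 2 * t ^ 2 * c)
        - (y ^ 4 + t ^ 4 + 2 * y ^ 2 * t ^ 2 * c) * (0 ^ 2 + t ^ 2)
        = t ^ 2 * (y ^ 2 * ((4 * s ^ 2 - 1) * t ^ 2 - y ^ 2)) := by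
      rw [hc]; ring
    have hdiff : redDens C t c y - redDens C t c 0
        = C * ((t ^ 2 * (y ^ 2 * ((4 * s ^ 2 - 1) * t ^ 2 - y ^ 2)))
            / ((y ^ 4 + t ^ 4 + 2 * y ^ 2 * t ^ 2 * c)
              * (0 ^ 4 + t ^ 4 + 2 * 0 ^ 2 * t ^ 2 * c))) := by
      simp only [redDens, ← mul_sub]
      rw [div_sub_div _ _ (hQne y) (hQne 0), key]
    have hnum : 0 < t ^ 2 * (y ^ 2 * ((4 * s ^ 2 - 1) * t ^ 2 - y ^ 2)) := by
      have h1 : 0 < (4 * s ^ 2 - 1) * t ^ 2 - y ^ 2 := by linarith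
      positivity
    have : 0 < redDens C t c y - redDens C t c 0 := by
      rw [hdiff]
      exact mul_pos hC (div_pos hnum (mul_pos (hQpos y) (hQpos 0)))
    linarith
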